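/- Let n ≥ 3 be an integer, p > 1, and σ > 0 reals with σ + 2/(p−1) < n (equivalently p > 1 + 2/(n−σ)). Let K : (0,∞)×ℝⁿ×ℝⁿ → ℝ be measurable with 0 ≤ K(t,x,y) ≤ C₀·φ_σ(x,t)·φ_σ(y,t)·G(x−y, ct) for some constants C₀ > 0, c > 1, all t > 0 and all x,y ∈ ℝⁿ∖{0}, and write (T_t w)(x) = ∫_{ℝⁿ} K(t,x,y) w(y) dy. Suppose there exist b > 0 and ℓ ∈ (2/(p−1), n−σ) such that the measurable nonnegative function w₀ : ℝⁿ → ℝ satisfies w₀(x) ≤ b|x|^{−2/(p−1)} for 0 < |x| ≤ 1 and w₀(x) ≤ b|x|^{−ℓ} for |x| ≥ 1. Then there exists C > 0 such that for all t ≥ 1, sup_{x ∈ ℝⁿ∖{0}} φ_σ(x,t)^{−1}·(T_t w₀)(x) ≤ C·t^{−ℓ/2}. -/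

import Mathlib

open Real MeasureTheory
open ENNReal

set_option maxHeartbeats 1000000

/-- The Gauss–Weierstrass heat kernel on `ℝⁿ`. -/
noncomputable def heatKernel (n : ℕ) (x : EuclideanSpace ℝ (Fin n)) (t : ℝ) : ℝ :=
  (4 * Real.pi * t) ^ (-(n : ℝ) / 2) * Real.exp (-‖x‖ ^ 2 / (4 * t))

/-- The weight `φ_σ(x,t) = (√t/|x|)^σ` for `|x| ≤ √t`, and `1` for `|x| ≥ √t`. -/
noncomputable def phiWeight (n : ℕ) (σ : ℝ) (x : EuclideanSpace ℝ (Fin n)) (t : ℝ) : ℝ :=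
  if ‖x‖ ≤ Real.sqrt t then (Real.sqrt t / ‖x‖) ^ σ else 1

lemma gauss_integrable (n : ℕ) {s : ℝ} (hs : 0 < s) :
    Integrable (fun z : EuclideanSpace ℝ (Fin n) => rexp (-‖z‖ ^ 2 / (4 * s))) := by
  have h := (GaussianFourier.integrable_cexp_neg_mul_sq_norm_add
    (V := EuclideanSpace ℝ (Fin n)) (b := (((4*s)⁻¹ : ℝ) : ℂ))
    (by simp; positivity) 0 0).norm
  refine h.congr (Filter.Eventually.of_forall fun z => ?_)
  simp only [zero_mul, add_zero, Complex.norm_exp]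
  have : (-(((4*s)⁻¹ : ℝ) : ℂ) * (‖z‖ : ℂ) ^ 2) = (((-‖z‖^2/(4*s) : ℝ)) : ℂ) := by
    push_cast; field_simp
  rw [this, Complex.ofReal_re]

lemma gauss_integral (n : ℕ) {s : ℝ} (hs : 0 < s) :
    ∫ z : EuclideanSpace ℝ (Fin n), rexp (-‖z‖ ^ 2 / (4 * s)) = (4 * π * s) ^ ((n : ℝ) / 2) := by
  have h := GaussianFourier.integral_rexp_neg_mul_sq_norm
    (V := EuclideanSpace ℝ (Fin n)) (b := (4*s)⁻¹) (by positivity)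
  rw [finrank_euclideanSpace_fin] at h
  have h2 : ∀ z : EuclideanSpace ℝ (Fin n), -(4*s)⁻¹ * ‖z‖^2 = -‖z‖^2 / (4*s) := by
    intro z; field_simp
  simp_rw [h2] at h
  rw [h]
  congr 1
  field_simp

lemma heat_integral (n : ℕ) {s : ℝ} (hs : 0 < s) (x : EuclideanSpace ℝ (Fin n)) :
    ∫ y : EuclideanSpace ℝ (Fin n), heatKernel n (x - y) s = 1 := by
  unfold heatKernel
  rw [integral_const_mul, integral_sub_left_eq_self (fun z => rexp (-‖z‖^2/(4*s))) volume x,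
    gauss_integral n hs]
  rw [← Real.rpow_add (by positivity)]
  rw [show -(n:ℝ)/2 + (n:ℝ)/2 = 0 by ring, Real.rpow_zero]

lemma heat_integrable (n : ℕ) {s : ℝ} (hs : 0 < s) (x : EuclideanSpace ℝ (Fin n)) :
    Integrable (fun y : EuclideanSpace ℝ (Fin n) => heatKernel n (x - y) s) := by
  unfold heatKernel
  exact (((gauss_integrable n hs).comp_sub_left x).const_mul _)

lemma heat_lintegral (n : ℕ) {s : ℝ} (hs : 0 < s) (x : EuclideanSpace ℝ (Fin n)) :
    ∫⁻ y : EuclideanSpace ℝ (Fin n), ENNReal.ofReal (heatKernel n (x - y) s) = 1 := by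
  rw [← ofReal_integral_eq_lintegral_ofReal (heat_integrable n hs x)
    (Filter.Eventually.of_forall fun y => by unfold heatKernel; positivity),
    heat_integral n hs x, ENNReal.ofReal_one]

lemma ball_lintegral (n : ℕ) (hn : 0 < n) {a : ℝ} (ha : 0 < a) (han : a < n) :
    ∃ κ : ℝ, 0 ≤ κ ∧ ∀ R : ℝ, 0 < R →
      ∫⁻ y in Metric.ball (0 : EuclideanSpace ℝ (Fin n)) R, ENNReal.ofReal (‖y‖ ^ (-a)) ≤
        ENNReal.ofReal (κ * R ^ ((n : ℝ) - a)) := by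
  classical
  haveI : Nonempty (Fin n) := ⟨⟨0, hn⟩⟩
  haveI : Nontrivial (EuclideanSpace ℝ (Fin n)) := by
    infer_instance

  set v : ℝ≥0∞ := volume (Metric.ball (0 : EuclideanSpace ℝ (Fin n)) 1) with hv_def
  have hv : v ≠ ⊤ := measure_ball_lt_top.ne
  set q : ℝ := (2 : ℝ) ^ (a - (n : ℝ)) with hq_def
  have hq0 : 0 < q := Real.rpow_pos_of_pos two_pos _
  have hq1 : q < 1 := Real.rpow_lt_one_of_one_lt_of_neg one_lt_two (by linarith)
  have hκ : 0 ≤ (2 : ℝ) ^ a * v.toReal * (1 - q)⁻¹ :=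
    mul_nonneg (mul_nonneg (by positivity) ENNReal.toReal_nonneg)
      (inv_nonneg.2 (by linarith))
  refine ⟨(2 : ℝ) ^ a * v.toReal * (1 - q)⁻¹, hκ, fun R hR => ?_⟩
  set r : ℕ → ℝ := fun k => R * (2 : ℝ) ^ (-(k : ℝ)) with hr_def
  have hrpos : ∀ k, 0 < r k := fun k => mul_pos hR (Real.rpow_pos_of_pos two_pos _)
  have h2 : ∀ k : ℕ, (2 : ℝ) ^ (-(k : ℝ)) = (1 / 2 : ℝ) ^ k := by
    intro k
    rw [Real.rpow_neg (by norm_num), Real.rpow_natCast, one_div, inv_pow]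
  set B : ℕ → Set (EuclideanSpace ℝ (Fin n)) := fun k => Metric.ball 0 (r k) with hB_def
  set A : ℕ → Set (EuclideanSpace ℝ (Fin n)) := fun k => B k \ B (k + 1) with hA_def
  have cover : Metric.ball (0 : EuclideanSpace ℝ (Fin n)) R \ {0} ⊆ ⋃ k, A k := by
    intro y hy
    obtain ⟨hyR, hy0⟩ := hy
    have hy0' : 0 < ‖y‖ := by
      simp only [Set.mem_singleton_iff] at hy0
      exact norm_pos_iff.2 hy0
    rw [mem_ball_zero_iff] at hyR
    have hex : ∃ m : ℕ, r (m + 1) ≤ ‖y‖ := by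
      obtain ⟨m, hm⟩ := exists_pow_lt_of_lt_one (x := ‖y‖ / R) (by positivity)
        (by norm_num : (1 / 2 : ℝ) < 1)
      refine ⟨m, ?_⟩
      have : r (m + 1) ≤ r m := by
        simp only [hr_def, h2]
        have : ((1:ℝ)/2) ^ (m+1) ≤ (1/2) ^ m := by
          apply pow_le_pow_of_le_one (by norm_num) (by norm_num)
          omega
        nlinarith
      refine this.trans ?_
      have : r m < ‖y‖ := by
        simp only [hr_def, h2]
        have hmr := (lt_div_iff₀ hR).1 hm
        nlinarith
      linarith
    set k := Nat.find hex with hk_def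
    have hk1 : r (k + 1) ≤ ‖y‖ := Nat.find_spec hex
    have hk2 : ‖y‖ < r k := by
      rcases Nat.eq_zero_or_pos k with h | h
      · simpa [h, hr_def] using hyR
      · obtain ⟨k', hk'⟩ := Nat.exists_eq_succ_of_ne_zero h.ne'
        have := Nat.find_min hex (m := k') (by rw [← hk_def]; omega)
        push_neg at this
        rw [hk']
        exact this
    exact Set.mem_iUnion.2 ⟨k, ⟨mem_ball_zero_iff.2 hk2,
      fun hc => absurd (mem_ball_zero_iff.1 hc) (not_lt.2 hk1)⟩⟩
  have hnull : (volume : Measure (EuclideanSpace ℝ (Fin n))) (Metric.ball (0 : EuclideanSpace ℝ (Fin n)) R ∩ {0}) = 0 :=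
    measure_mono_null Set.inter_subset_right (measure_singleton 0)
  calc ∫⁻ y in Metric.ball (0 : EuclideanSpace ℝ (Fin n)) R, ENNReal.ofReal (‖y‖ ^ (-a)) ∂volume
      = ∫⁻ y in Metric.ball (0 : EuclideanSpace ℝ (Fin n)) R \ {0}, ENNReal.ofReal (‖y‖ ^ (-a)) ∂volume := by
        rw [Measure.restrict_congr_set (diff_ae_eq_self.2 hnull)]
    _ ≤ ∑' k, ∫⁻ y in A k, ENNReal.ofReal (‖y‖ ^ (-a)) ∂volume :=
        le_trans (lintegral_mono_set cover) (lintegral_iUnion_le _ _)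
    _ ≤ ∑' k, ENNReal.ofReal ((r (k+1)) ^ (-a)) * (ENNReal.ofReal ((r k) ^ n) * v) := by
        refine ENNReal.tsum_le_tsum fun k => ?_
        have step1 : ∫⁻ y in A k, ENNReal.ofReal (‖y‖ ^ (-a)) ∂volume ≤
            ∫⁻ _ in A k, ENNReal.ofReal ((r (k+1)) ^ (-a)) ∂volume := by
          refine setLIntegral_mono measurable_const fun y hy => ?_
          refine ENNReal.ofReal_le_ofReal ?_
          refine Real.rpow_le_rpow_of_nonpos (hrpos (k+1)) ?_ (by linarith)
          have := hy.2
          rw [hB_def] at this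
          simp only [mem_ball_zero_iff, not_lt] at this
          exact this
        refine step1.trans ?_
        rw [setLIntegral_const]
        refine mul_le_mul_right ?_ _
        refine (measure_mono Set.diff_subset).trans ?_
        rw [hB_def]
        rw [Measure.addHaar_ball volume 0 (hrpos k).le, finrank_euclideanSpace_fin]
    _ ≤ ENNReal.ofReal ((2 : ℝ) ^ a * v.toReal * (1 - q)⁻¹ * R ^ ((n : ℝ) - a)) := by
        have h2' : (0:ℝ) ≤ 2 := by norm_num
        have key : ∀ k : ℕ, (r (k+1)) ^ (-a) * (r k) ^ n =
            (R ^ ((n : ℝ) - a) * (2 : ℝ) ^ a) * q ^ k := by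
          intro k
          have eR : (R ^ ((n : ℝ) - a) * (2 : ℝ) ^ a) * q ^ k
              = R ^ ((n:ℝ) - a) * (2:ℝ) ^ (a + (a - (n:ℝ)) * k) := by
            rw [hq_def, ← Real.rpow_natCast ((2:ℝ) ^ (a - (n:ℝ))) k,
              ← Real.rpow_mul h2', mul_assoc, ← Real.rpow_add two_pos]
          rw [eR]
          simp only [hr_def]
          push_cast
          rw [Real.mul_rpow hR.le (Real.rpow_nonneg h2' _),
            ← Real.rpow_natCast (R * (2:ℝ) ^ (-(k:ℝ))) n,
            Real.mul_rpow hR.le (Real.rpow_nonneg h2' _),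
            ← Real.rpow_mul h2', ← Real.rpow_mul h2',
            mul_mul_mul_comm, ← Real.rpow_add hR, ← Real.rpow_add two_pos]
          congr 1 <;> push_cast <;> ring
        have hsum : ∑' k, ENNReal.ofReal ((r (k+1)) ^ (-a)) * (ENNReal.ofReal ((r k) ^ n) * v)
            = ENNReal.ofReal (R ^ ((n : ℝ) - a) * (2 : ℝ) ^ a) * ((1 - ENNReal.ofReal q)⁻¹ * v) := by
          have step : ∀ k : ℕ, ENNReal.ofReal ((r (k+1)) ^ (-a)) * (ENNReal.ofReal ((r k) ^ n) * v)
              = ENNReal.ofReal (R ^ ((n : ℝ) - a) * (2 : ℝ) ^ a) * ((ENNReal.ofReal q) ^ k * v) := by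
            intro k
            rw [← mul_assoc, ← ENNReal.ofReal_mul (Real.rpow_nonneg (hrpos (k+1)).le _), key k,
              ENNReal.ofReal_mul (by positivity), ENNReal.ofReal_pow hq0.le, mul_assoc]
          simp_rw [step]
          rw [ENNReal.tsum_mul_left]
          congr 1
          rw [ENNReal.tsum_mul_right, ENNReal.tsum_geometric]
        rw [hsum]
        have hq' : (1 : ℝ≥0∞) - ENNReal.ofReal q = ENNReal.ofReal (1 - q) := by
          rw [ENNReal.ofReal_sub 1 hq0.le, ENNReal.ofReal_one]
        rw [hq', ← ENNReal.ofReal_inv_of_pos (by linarith : (0:ℝ) < 1 - q),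
          ← mul_assoc, ← ENNReal.ofReal_mul (by positivity)]
        have he : (2:ℝ) ^ a * v.toReal * (1-q)⁻¹ * R ^ ((n:ℝ)-a)
            = (R ^ ((n:ℝ)-a) * 2 ^ a * (1-q)⁻¹) * v.toReal := by ring
        rw [he, ENNReal.ofReal_mul
          (mul_nonneg (by positivity) (inv_nonneg.2 (by linarith : (0:ℝ) ≤ 1 - q))),
          ENNReal.ofReal_toReal hv]
/-- Weighted sup-bound for integral operators dominated by the Liskevich–Sobol /
Milman–Semenov kernel estimate, applied to data `w₀` decaying like `|x|^{−2/(p−1)}`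
near the origin and like `|x|^{−ℓ}` at infinity. -/
theorem weighted_sup_decay (n : ℕ) (hn : 3 ≤ n) (p σ : ℝ) (hp : 1 < p) (hσ : 0 < σ)
    (hσp : σ + 2 / (p - 1) < (n : ℝ))
    (K : ℝ → EuclideanSpace ℝ (Fin n) → EuclideanSpace ℝ (Fin n) → ℝ)
    (hKmeas : Measurable fun q : ℝ × EuclideanSpace ℝ (Fin n) × EuclideanSpace ℝ (Fin n) =>
      K q.1 q.2.1 q.2.2)
    (C₀ c : ℝ) (hC₀ : 0 < C₀) (hc : 1 < c)
    (hK0 : ∀ t > (0 : ℝ), ∀ x y, 0 ≤ K t x y)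
    (hK : ∀ t > (0 : ℝ), ∀ x y : EuclideanSpace ℝ (Fin n), x ≠ 0 → y ≠ 0 →
      K t x y ≤ C₀ * phiWeight n σ x t * phiWeight n σ y t * heatKernel n (x - y) (c * t))
    (w₀ : EuclideanSpace ℝ (Fin n) → ℝ) (hw₀meas : Measurable w₀)
    (hw₀0 : ∀ x, 0 ≤ w₀ x)
    (b ℓ : ℝ) (hb : 0 < b) (hℓ : ℓ ∈ Set.Ioo (2 / (p - 1)) ((n : ℝ) - σ))
    (hsmall : ∀ x : EuclideanSpace ℝ (Fin n), 0 < ‖x‖ → ‖x‖ ≤ 1 →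
      w₀ x ≤ b * ‖x‖ ^ (-(2 / (p - 1))))
    (hlarge : ∀ x : EuclideanSpace ℝ (Fin n), 1 ≤ ‖x‖ → w₀ x ≤ b * ‖x‖ ^ (-ℓ)) :
    ∃ C > 0, ∀ t ≥ (1 : ℝ), ∀ x : EuclideanSpace ℝ (Fin n), x ≠ 0 →
      (phiWeight n σ x t)⁻¹ * ∫ y, K t x y * w₀ y ≤ C * t ^ (-ℓ / 2) := by
  classical
  obtain ⟨hℓ1, hℓ2⟩ := hℓ
  have hp1 : 0 < p - 1 := by linarith
  have hℓpos : 0 < ℓ := lt_trans (by positivity) hℓ1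
  have hn0 : 0 < n := by omega
  haveI : Nonempty (Fin n) := ⟨⟨0, hn0⟩⟩
  haveI : Nontrivial (EuclideanSpace ℝ (Fin n)) := by
    infer_instance
  set a : ℝ := σ + ℓ with ha_def
  have ha : 0 < a := by positivity
  have han : a < (n : ℝ) := by simp only [ha_def]; linarith
  obtain ⟨κ, hκ0, hκ⟩ := ball_lintegral n hn0 ha han
  have hπc : (0 : ℝ) < (4 * π * c) ^ (-(n : ℝ) / 2) :=
    Real.rpow_pos_of_pos (by positivity) _
  set C : ℝ := C₀ * b * (κ * (4 * π * c) ^ (-(n : ℝ) / 2) + 1) with hC_def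
  have hCpos : 0 < C :=
    mul_pos (mul_pos hC₀ hb) (add_pos_of_nonneg_of_pos (mul_nonneg hκ0 hπc.le) one_pos)
  refine ⟨C, hCpos, fun t ht x hx => ?_⟩
  have ht0 : 0 < t := lt_of_lt_of_le one_pos ht
  have hct : 0 < c * t := by positivity
  have hst : 0 < Real.sqrt t := Real.sqrt_pos.2 ht0
  have hxn : 0 < ‖x‖ := norm_pos_iff.2 hx
  have hφ : ∀ y : EuclideanSpace ℝ (Fin n), y ≠ 0 → 0 < phiWeight n σ y t := by
    intro y hy
    unfold phiWeight
    split_ifs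
    · exact Real.rpow_pos_of_pos (div_pos hst (norm_pos_iff.2 hy)) σ
    · exact one_pos
  have hφx : 0 < phiWeight n σ x t := hφ x hx
  -- uniform bound on w₀
  have hw : ∀ y : EuclideanSpace ℝ (Fin n), y ≠ 0 → w₀ y ≤ b * ‖y‖ ^ (-ℓ) := by
    intro y hy
    have hyn : 0 < ‖y‖ := norm_pos_iff.2 hy
    rcases le_total ‖y‖ 1 with h1 | h1
    · refine (hsmall y hyn h1).trans ?_
      refine mul_le_mul_of_nonneg_left ?_ hb.le
      exact Real.rpow_le_rpow_of_exponent_ge hyn h1 (by linarith)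
    · exact hlarge y h1
  -- constants
  set D1 : ℝ := C₀ * b * phiWeight n σ x t *
    (t ^ (σ / 2) * ((4 * π * c) ^ (-(n : ℝ) / 2) * t ^ (-(n : ℝ) / 2))) with hD1_def
  set D2 : ℝ := C₀ * b * phiWeight n σ x t * t ^ (-ℓ / 2) with hD2_def
  have hD1nn : 0 ≤ D1 := by
    have := hφx.le
    refine mul_nonneg (mul_nonneg (mul_nonneg hC₀.le hb.le) this) (by positivity)
  have hD2nn : 0 ≤ D2 := by
    have := hφx.le
    exact mul_nonneg (mul_nonneg (mul_nonneg hC₀.le hb.le) this) (by positivity)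
  set g : EuclideanSpace ℝ (Fin n) → ℝ≥0∞ := fun y =>
    (Metric.ball (0 : EuclideanSpace ℝ (Fin n)) (Real.sqrt t)).indicator
      (fun y => ENNReal.ofReal (D1 * ‖y‖ ^ (-a))) y +
      ENNReal.ofReal (D2 * heatKernel n (x - y) (c * t)) with hg_def
  -- pointwise bound
  have hpt : ∀ y : EuclideanSpace ℝ (Fin n), y ≠ 0 →
      ENNReal.ofReal (K t x y * w₀ y) ≤ g y := by
    intro y hy
    have hyn : 0 < ‖y‖ := norm_pos_iff.2 hy
    have hG : 0 < heatKernel n (x - y) (c * t) := by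
      unfold heatKernel; positivity
    have hφy : 0 < phiWeight n σ y t := hφ y hy
    have hKb : K t x y * w₀ y ≤
        (C₀ * phiWeight n σ x t * phiWeight n σ y t * heatKernel n (x - y) (c * t)) *
          (b * ‖y‖ ^ (-ℓ)) := by
      refine mul_le_mul (hK t ht0 x y hx hy) (hw y hy) (hw₀0 y) ?_
      have := hφx.le
      positivity
    rcases lt_or_ge ‖y‖ (Real.sqrt t) with hlt | hge
    · -- inner region
      have hφy_eq : phiWeight n σ y t = t ^ (σ / 2) * ‖y‖ ^ (-σ) := by
        unfold phiWeight
        rw [if_pos hlt.le, Real.div_rpow (Real.sqrt_nonneg t) (norm_nonneg y),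
          Real.rpow_neg (norm_nonneg y), div_eq_mul_inv]
        congr 1
        rw [Real.sqrt_eq_rpow, ← Real.rpow_mul ht0.le]
        congr 1; ring
      have hGle : heatKernel n (x - y) (c * t) ≤
          (4 * π * c) ^ (-(n : ℝ) / 2) * t ^ (-(n : ℝ) / 2) := by
        unfold heatKernel
        have h1 : rexp (-‖x - y‖ ^ 2 / (4 * (c * t))) ≤ 1 :=
          Real.exp_le_one_iff.2 (by rw [neg_div]; exact neg_nonpos.2 (by positivity))
        calc (4 * π * (c * t)) ^ (-(n : ℝ) / 2) * rexp (-‖x - y‖ ^ 2 / (4 * (c * t)))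
            ≤ (4 * π * (c * t)) ^ (-(n : ℝ) / 2) * 1 := by
              refine mul_le_mul_of_nonneg_left h1 ?_
              positivity
          _ = (4 * π * c) ^ (-(n : ℝ) / 2) * t ^ (-(n : ℝ) / 2) := by
              rw [mul_one, show 4 * π * (c * t) = (4 * π * c) * t by ring,
                Real.mul_rpow (by positivity) ht0.le]
      have hpow : ‖y‖ ^ (-σ) * ‖y‖ ^ (-ℓ) = ‖y‖ ^ (-a) := by
        rw [← Real.rpow_add hyn]; congr 1; rw [ha_def]; ring
      have main : K t x y * w₀ y ≤ D1 * ‖y‖ ^ (-a) := by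
        refine hKb.trans ?_
        calc (C₀ * phiWeight n σ x t * phiWeight n σ y t * heatKernel n (x - y) (c * t)) *
              (b * ‖y‖ ^ (-ℓ))
            = (C₀ * b * phiWeight n σ x t) * (t ^ (σ / 2) * (‖y‖ ^ (-σ) * ‖y‖ ^ (-ℓ))) *
              heatKernel n (x - y) (c * t) := by rw [hφy_eq]; ring
          _ = (C₀ * b * phiWeight n σ x t) * (t ^ (σ / 2) * ‖y‖ ^ (-a)) *
              heatKernel n (x - y) (c * t) := by rw [hpow]
          _ ≤ (C₀ * b * phiWeight n σ x t) * (t ^ (σ / 2) * ‖y‖ ^ (-a)) *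
              ((4 * π * c) ^ (-(n : ℝ) / 2) * t ^ (-(n : ℝ) / 2)) := by
              refine mul_le_mul_of_nonneg_left hGle ?_
              have := hφx.le
              positivity
          _ = D1 * ‖y‖ ^ (-a) := by rw [hD1_def]; ring
      rw [hg_def]
      simp only
      rw [Set.indicator_of_mem (mem_ball_zero_iff.2 hlt)]
      exact le_trans (ENNReal.ofReal_le_ofReal main) le_self_add
    · -- outer region
      have hφy1 : phiWeight n σ y t ≤ 1 := by
        unfold phiWeight
        split_ifs with h
        · exact Real.rpow_le_one (by positivity) (div_le_one_of_le₀ hge (norm_nonneg y)) hσ.le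
        · exact le_rfl
      have hyt : ‖y‖ ^ (-ℓ) ≤ t ^ (-ℓ / 2) := by
        have h1 : ‖y‖ ^ (-ℓ) ≤ (Real.sqrt t) ^ (-ℓ) :=
          Real.rpow_le_rpow_of_nonpos hst hge (by linarith)
        refine h1.trans (le_of_eq ?_)
        rw [Real.sqrt_eq_rpow, ← Real.rpow_mul ht0.le]
        congr 1; ring
      have main : K t x y * w₀ y ≤ D2 * heatKernel n (x - y) (c * t) := by
        refine hKb.trans ?_
        have step : phiWeight n σ y t * ‖y‖ ^ (-ℓ) ≤ t ^ (-ℓ / 2) := by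
          calc phiWeight n σ y t * ‖y‖ ^ (-ℓ) ≤ 1 * ‖y‖ ^ (-ℓ) :=
                mul_le_mul_of_nonneg_right hφy1 (by positivity)
            _ = ‖y‖ ^ (-ℓ) := one_mul _
            _ ≤ t ^ (-ℓ / 2) := hyt
        calc (C₀ * phiWeight n σ x t * phiWeight n σ y t * heatKernel n (x - y) (c * t)) *
              (b * ‖y‖ ^ (-ℓ))
            = (C₀ * b * phiWeight n σ x t * heatKernel n (x - y) (c * t)) *
              (phiWeight n σ y t * ‖y‖ ^ (-ℓ)) := by ring
          _ ≤ (C₀ * b * phiWeight n σ x t * heatKernel n (x - y) (c * t)) * t ^ (-ℓ / 2) := by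
              refine mul_le_mul_of_nonneg_left step ?_
              have := hφx.le
              positivity
          _ = D2 * heatKernel n (x - y) (c * t) := by rw [hD2_def]; ring
      rw [hg_def]
      simp only
      exact le_trans (ENNReal.ofReal_le_ofReal main) le_add_self
  -- measurability
  have hfm : Measurable fun y => K t x y * w₀ y := by
    have : Measurable fun y : EuclideanSpace ℝ (Fin n) => K t x y :=
      hKmeas.comp (measurable_const.prodMk (measurable_const.prodMk measurable_id))
    exact this.mul hw₀meas
  have hint_eq : ∫ y, K t x y * w₀ y =
      (∫⁻ y, ENNReal.ofReal (K t x y * w₀ y)).toReal :=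
    integral_eq_lintegral_of_nonneg_ae
      (Filter.Eventually.of_forall fun y => mul_nonneg (hK0 t ht0 x y) (hw₀0 y))
      hfm.aestronglyMeasurable
  -- power computations
  have hsq : (Real.sqrt t) ^ ((n : ℝ) - a) = t ^ (((n : ℝ) - a) / 2) := by
    rw [Real.sqrt_eq_rpow, ← Real.rpow_mul ht0.le]
    congr 1; ring
  have hcomb : D1 * (κ * t ^ (((n : ℝ) - a) / 2)) + D2 =
      phiWeight n σ x t * (C * t ^ (-ℓ / 2)) := by
    have e1 : t ^ (σ / 2) * t ^ (-(n : ℝ) / 2) * t ^ (((n : ℝ) - a) / 2) = t ^ (-ℓ / 2) := by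
      rw [← Real.rpow_add ht0, ← Real.rpow_add ht0]
      congr 1; rw [ha_def]; ring
    rw [hD1_def, hD2_def, hC_def]
    linear_combination (C₀ * b * phiWeight n σ x t * κ * (4 * π * c) ^ (-(n : ℝ) / 2)) * e1
  -- the main lintegral bound
  have hlint : ∫⁻ y, ENNReal.ofReal (K t x y * w₀ y) ≤
      ENNReal.ofReal (phiWeight n σ x t * (C * t ^ (-ℓ / 2))) := by
    have h0 : ∀ᵐ y : EuclideanSpace ℝ (Fin n), y ≠ (0 : EuclideanSpace ℝ (Fin n)) := by
      rw [ae_iff]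
      simpa using measure_singleton (0 : EuclideanSpace ℝ (Fin n))
    have hmono : ∫⁻ y, ENNReal.ofReal (K t x y * w₀ y) ≤ ∫⁻ y, g y :=
      lintegral_mono_ae (h0.mono fun y hy => hpt y hy)
    refine hmono.trans ?_
    have hmeas1 : Measurable fun y : EuclideanSpace ℝ (Fin n) =>
        ENNReal.ofReal (D1 * ‖y‖ ^ (-a)) := by
      exact (by fun_prop : Measurable fun y : EuclideanSpace ℝ (Fin n) => D1 * ‖y‖ ^ (-a)).ennreal_ofReal
    have hsplit : ∫⁻ y, g y =
        (∫⁻ y in Metric.ball (0 : EuclideanSpace ℝ (Fin n)) (Real.sqrt t),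
          ENNReal.ofReal (D1 * ‖y‖ ^ (-a))) +
        ∫⁻ y, ENNReal.ofReal (D2 * heatKernel n (x - y) (c * t)) := by
      rw [hg_def]
      rw [lintegral_add_left ((hmeas1.indicator measurableSet_ball))]
      rw [lintegral_indicator measurableSet_ball]
    rw [hsplit]
    have hb1 : ∫⁻ y in Metric.ball (0 : EuclideanSpace ℝ (Fin n)) (Real.sqrt t),
        ENNReal.ofReal (D1 * ‖y‖ ^ (-a)) ≤ ENNReal.ofReal (D1 * (κ * t ^ (((n : ℝ) - a) / 2))) := by
      have : ∀ y : EuclideanSpace ℝ (Fin n),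
          ENNReal.ofReal (D1 * ‖y‖ ^ (-a)) = ENNReal.ofReal D1 * ENNReal.ofReal (‖y‖ ^ (-a)) :=
        fun y => ENNReal.ofReal_mul hD1nn
      simp_rw [this]
      rw [lintegral_const_mul _
        ((by fun_prop : Measurable fun y : EuclideanSpace ℝ (Fin n) => ‖y‖ ^ (-a)).ennreal_ofReal)]
      calc ENNReal.ofReal D1 * ∫⁻ y in Metric.ball (0 : EuclideanSpace ℝ (Fin n)) (Real.sqrt t),
            ENNReal.ofReal (‖y‖ ^ (-a))
          ≤ ENNReal.ofReal D1 * ENNReal.ofReal (κ * (Real.sqrt t) ^ ((n : ℝ) - a)) :=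
            mul_le_mul_right (hκ (Real.sqrt t) hst) _
        _ = ENNReal.ofReal (D1 * (κ * t ^ (((n : ℝ) - a) / 2))) := by
            rw [← ENNReal.ofReal_mul hD1nn, hsq]
    have hb2 : ∫⁻ y, ENNReal.ofReal (D2 * heatKernel n (x - y) (c * t)) = ENNReal.ofReal D2 := by
      have : ∀ y : EuclideanSpace ℝ (Fin n),
          ENNReal.ofReal (D2 * heatKernel n (x - y) (c * t)) =
            ENNReal.ofReal D2 * ENNReal.ofReal (heatKernel n (x - y) (c * t)) :=
        fun y => ENNReal.ofReal_mul hD2nn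
      simp_rw [this]
      have hcont : Continuous fun y : EuclideanSpace ℝ (Fin n) =>
          heatKernel n (x - y) (c * t) := by
        unfold heatKernel
        exact continuous_const.mul (Real.continuous_exp.comp (by fun_prop))
      rw [lintegral_const_mul _ hcont.measurable.ennreal_ofReal,
        heat_lintegral n hct x, mul_one]
    calc _ ≤ ENNReal.ofReal (D1 * (κ * t ^ (((n : ℝ) - a) / 2))) + ENNReal.ofReal D2 := by
          rw [hb2]; exact add_le_add_left hb1 _
      _ = ENNReal.ofReal (D1 * (κ * t ^ (((n : ℝ) - a) / 2)) + D2) :=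
          (ENNReal.ofReal_add (mul_nonneg hD1nn (mul_nonneg hκ0 (by positivity))) hD2nn).symm
      _ = ENNReal.ofReal (phiWeight n σ x t * (C * t ^ (-ℓ / 2))) := by rw [hcomb]
  -- conclude
  rw [hint_eq]
  have hrhs0 : 0 ≤ phiWeight n σ x t * (C * t ^ (-ℓ / 2)) := by
    have := hφx.le
    positivity
  have h1 : (∫⁻ y, ENNReal.ofReal (K t x y * w₀ y)).toReal ≤
      phiWeight n σ x t * (C * t ^ (-ℓ / 2)) :=
    ENNReal.toReal_le_of_le_ofReal hrhs0 hlint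
  calc (phiWeight n σ x t)⁻¹ * (∫⁻ y, ENNReal.ofReal (K t x y * w₀ y)).toReal
      ≤ (phiWeight n σ x t)⁻¹ * (phiWeight n σ x t * (C * t ^ (-ℓ / 2))) :=
        mul_le_mul_of_nonneg_left h1 (inv_nonneg.2 hφx.le)
    _ = C * t ^ (-ℓ / 2) := by
        rw [← mul_assoc, inv_mul_cancel₀ hφx.ne', one_mul]
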